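/- The number of distinct unordered partitions of Z_q^N (N = (q^m-1)/(q-1)) obtained from column permutations of the fractal matrix M_{q,m} is exactly N! ; equivalently, for any two distinct permutations σ, τ of the columns of M_{q,m}, the resulting star matrices define different unordered families of subcubes. -/
import Mathlib


/-- The subcube of `(Z_q)^C` defined by a star pattern `p` (`none` = `*`):
all vectors agreeing with `p` on every coordinate where `p` is numerical. -/
def Subcube {q : ℕ} {C : Type} (p : C → Option (ZMod q)) : Set (C → ZMod q) :=
  {x | ∀ c : C, ∀ a : ZMod q, p c = some a → x c = a}

/-- The number of numerical entries of a star pattern. -/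
noncomputable def numCount {q : ℕ} {C : Type} (p : C → Option (ZMod q)) : ℕ :=
  Nat.card {c : C // (p c).isSome}

/-- The rows of the star matrix `M` define pairwise disjoint subcubes covering the cube. -/
def IsPartitionMatrix (q : ℕ) {R C : Type} (M : R → C → Option (ZMod q)) : Prop :=
  (∀ r r' : R, r ≠ r' → Subcube (M r) ∩ Subcube (M r') = ∅) ∧
  (∀ x : C → ZMod q, ∃ r : R, x ∈ Subcube (M r))

/-- A star matrix is A-primitive if every column has at least one numerical entry. -/
def APrimitive {q : ℕ} {R C : Type} (M : R → C → Option (ZMod q)) : Prop :=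
  ∀ c : C, ∃ r : R, (M r c).isSome

/-- Number of rows of the fractal matrix `M_{q,m}`. -/
def Nrows (q : ℕ) : ℕ → ℕ
  | 0 => 1
  | m + 1 => q * Nrows q m

/-- Number of columns of the fractal matrix `M_{q,m}`. -/
def Ncols (q : ℕ) : ℕ → ℕ
  | 0 => 0
  | m + 1 => 1 + q * Ncols q m

/-- Entry of the fractal matrix `M_{q,m}` in row `r`, column `c` (as natural number
indices): `M_{q,0}` has one row and no columns; `M_{q,m+1}` consists of `q` horizontal
stripes indexed by `a ∈ Z_q`, stripe `a` having the constant value `a` in the first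
column, a copy of `M_{q,m}` in the `a`-th of `q` column blocks, and all-stars elsewhere. -/
def fractalEntry (q : ℕ) : ℕ → ℕ → ℕ → Option (ZMod q)
  | 0, _, _ => none
  | m + 1, r, c =>
    if c = 0 then some (Nat.cast (r / Nrows q m))
    else if (c - 1) / Ncols q m = r / Nrows q m then
      fractalEntry q m (r % Nrows q m) ((c - 1) % Ncols q m)
    else none

/-- The fractal star matrix `M_{q,m}`. -/
def fractalMatrix (q m : ℕ) : Fin (Nrows q m) → Fin (Ncols q m) → Option (ZMod q) :=
  fun r c => fractalEntry q m r.1 c.1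


lemma Nrows_pos (q m : ℕ) (hq : 1 ≤ q) : 0 < Nrows q m := by
  induction m with
  | zero => simp [Nrows]
  | succ m ih => simpa [Nrows] using Nat.mul_pos (by omega) ih

lemma Ncols_pos (q m : ℕ) (hm : 1 ≤ m) : 0 < Ncols q m := by
  cases m with
  | zero => omega
  | succ m => simp [Ncols]

lemma entry_zero (q m r : ℕ) :
    fractalEntry q (m+1) r 0 = some ((r / Nrows q m : ℕ) : ZMod q) := by
  simp [fractalEntry]

lemma entry_pos (q m r c : ℕ) (hc : c ≠ 0) :
    fractalEntry q (m+1) r c =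
      if (c - 1) / Ncols q m = r / Nrows q m then
        fractalEntry q m (r % Nrows q m) ((c - 1) % Ncols q m)
      else none := by
  simp [fractalEntry, hc]

lemma castInj (q a b : ℕ) (ha : a < q) (hb : b < q) (h : (a : ZMod q) = b) : a = b := by
  haveI : NeZero q := ⟨by omega⟩
  have := congrArg ZMod.val h
  rwa [ZMod.val_cast_of_lt ha, ZMod.val_cast_of_lt hb] at this

lemma row_lt (R s b q : ℕ) (hs : s < R) (hb : b < q) : s + R * b < q * R :=
  calc s + R * b < R + R * b := by omega
    _ = R * (b + 1) := by ring
    _ ≤ R * q := Nat.mul_le_mul_left R (by omega)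
    _ = q * R := Nat.mul_comm R q

lemma col_lt (N c' b q : ℕ) (hc : c' < N) (hb : b < q) :
    1 + (c' + N * b) < 1 + q * N := by
  have := row_lt N c' b q hc hb
  omega

lemma colPrim (q : ℕ) (hq : 2 ≤ q) :
    ∀ m, 1 ≤ m → ∀ c < Ncols q m, ∃ r < Nrows q m, (fractalEntry q m r c).isSome := by
  intro m
  induction m with
  | zero => omega
  | succ m ih =>
    intro _ c hc
    by_cases hc0 : c = 0
    · exact ⟨0, Nrows_pos q (m+1) (by omega), by subst hc0; simp [entry_zero]⟩
    · have hm : 1 ≤ m := by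
        rcases Nat.eq_zero_or_pos m with h0 | h
        · subst h0; simp [Ncols] at hc; omega
        · exact h
      have hN : 0 < Ncols q m := Ncols_pos q m hm
      have hNc : Ncols q (m+1) = 1 + q * Ncols q m := rfl
      have hc1 : c - 1 < q * Ncols q m := by omega
      have hb : (c - 1) / Ncols q m < q := (Nat.div_lt_iff_lt_mul hN).mpr (by omega)
      obtain ⟨s, hs, hsome⟩ := ih hm ((c - 1) % Ncols q m) (Nat.mod_lt _ hN)
      refine ⟨s + Nrows q m * ((c - 1) / Ncols q m), ?_, ?_⟩
      · exact row_lt _ s _ q hs hb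
      · rw [entry_pos q m _ c hc0]
        have hR : 0 < Nrows q m := Nrows_pos q m (by omega)
        rw [Nat.add_mul_div_left _ _ hR, Nat.div_eq_of_lt hs,
          Nat.add_mul_mod_self_left, Nat.mod_eq_of_lt hs]
        simpa using hsome

set_option maxHeartbeats 1000000 in
lemma good (q : ℕ) (hq : 2 ≤ q) :
    ∀ m, 1 ≤ m → ∀ π : Equiv.Perm (Fin (Ncols q m)),
      (∀ r : Fin (Nrows q m), ∃ r', ∀ c,
        fractalMatrix q m r' c = fractalMatrix q m r (π c)) →
      (∀ r : Fin (Nrows q m), ∃ r', ∀ c,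
        fractalMatrix q m r' (π c) = fractalMatrix q m r c) →
      π = 1 := by
  intro m
  induction m with
  | zero => omega
  | succ m ih =>
    intro _ π H1 H2
    by_cases hm0 : m = 0
    · subst hm0
      have h1 : Ncols q (0+1) = 1 := by simp [Ncols]
      apply Equiv.ext
      intro c
      simp only [Equiv.Perm.coe_one, id_eq]
      apply Fin.ext
      have h2 := (π c).isLt
      have h3 := c.isLt
      omega
    · have hm : 1 ≤ m := by omega
      have hRpos : 0 < Nrows q m := Nrows_pos q m (by omega)
      have hNpos : 0 < Ncols q m := Ncols_pos q m hm
      have hNc : Ncols q (m+1) = 1 + q * Ncols q m := rfl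
      have hNr : Nrows q (m+1) = q * Nrows q m := rfl
      have h0 : (0:ℕ) < Ncols q (m+1) := by omega
      -- Step A : π fixes the zero column
      have hπ0 : π ⟨0, h0⟩ = ⟨0, h0⟩ := by
        by_contra hne
        have hv : (π ⟨0,h0⟩).1 ≠ 0 := fun h => hne (Fin.ext h)
        have hx : (π ⟨0,h0⟩).1 < 1 + q * Ncols q m := by
          have := (π ⟨0,h0⟩).isLt; omega
        have hb : ((π ⟨0,h0⟩).1 - 1) / Ncols q m < q :=
          (Nat.div_lt_iff_lt_mul hNpos).mpr (by omega)
        set b := ((π ⟨0,h0⟩).1 - 1) / Ncols q m with hbdef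
        set a := (b + 1) % q with hadef
        have ha : a < q := Nat.mod_lt _ (by omega)
        have hab : a ≠ b := by
          rcases Nat.lt_or_ge (b + 1) q with h | h
          · rw [hadef, Nat.mod_eq_of_lt h]; omega
          · have hbq : b + 1 = q := by omega
            rw [hadef, hbq, Nat.mod_self]; omega
        obtain ⟨r', hr'⟩ := H1 ⟨Nrows q m * a, by
          have := row_lt (Nrows q m) 0 a q hRpos ha; omega⟩
        have key := hr' ⟨0, h0⟩
        have hRHS : fractalMatrix q (m+1) ⟨Nrows q m * a, by
            have := row_lt (Nrows q m) 0 a q hRpos ha; omega⟩ (π ⟨0,h0⟩) = none := by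
          show fractalEntry q (m+1) (Nrows q m * a) (π ⟨0,h0⟩).1 = none
          rw [entry_pos q m _ _ hv, Nat.mul_div_cancel_left a hRpos]
          rw [if_neg (by rw [← hbdef]; omega)]
        rw [hRHS] at key
        have hLHS : fractalMatrix q (m+1) r' ⟨0, h0⟩ =
            some ((r'.1 / Nrows q m : ℕ) : ZMod q) := entry_zero q m r'.1
        rw [hLHS] at key
        exact Option.some_ne_none _ key
      -- Step B : digit preservation
      have digitB : ∀ (r r' : Fin (Nrows q (m+1))),
          (∀ c, fractalMatrix q (m+1) r' c = fractalMatrix q (m+1) r (π c)) →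
          r'.1 / Nrows q m = r.1 / Nrows q m := by
        intro r r' h
        have key := h ⟨0, h0⟩
        rw [hπ0] at key
        rw [show fractalMatrix q (m+1) r' ⟨0,h0⟩ = _ from entry_zero q m r'.1,
          show fractalMatrix q (m+1) r ⟨0,h0⟩ = _ from entry_zero q m r.1] at key
        have hr' : r'.1 / Nrows q m < q := (Nat.div_lt_iff_lt_mul hRpos).mpr (by
          have := r'.isLt; omega)
        have hr : r.1 / Nrows q m < q := (Nat.div_lt_iff_lt_mul hRpos).mpr (by
          have := r.isLt; omega)
        exact castInj q _ _ hr' hr (Option.some.inj key)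
      have digitB2 : ∀ (r r' : Fin (Nrows q (m+1))),
          (∀ c, fractalMatrix q (m+1) r' (π c) = fractalMatrix q (m+1) r c) →
          r'.1 / Nrows q m = r.1 / Nrows q m := by
        intro r r' h
        have key := h ⟨0, h0⟩
        rw [hπ0] at key
        rw [show fractalMatrix q (m+1) r' ⟨0,h0⟩ = _ from entry_zero q m r'.1,
          show fractalMatrix q (m+1) r ⟨0,h0⟩ = _ from entry_zero q m r.1] at key
        have hr' : r'.1 / Nrows q m < q := (Nat.div_lt_iff_lt_mul hRpos).mpr (by
          have := r'.isLt; omega)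
        have hr : r.1 / Nrows q m < q := (Nat.div_lt_iff_lt_mul hRpos).mpr (by
          have := r.isLt; omega)
        exact castInj q _ _ hr' hr (Option.some.inj key)
      -- isSome forces the block to match the digit
      have blockOf : ∀ (r : ℕ) (c : Fin (Ncols q (m+1))), c.1 ≠ 0 →
          (fractalEntry q (m+1) r c.1).isSome →
          (c.1 - 1) / Ncols q m = r / Nrows q m := by
        intro r c hc hs
        rw [entry_pos q m r c.1 hc] at hs
        by_cases h : (c.1 - 1) / Ncols q m = r / Nrows q m
        · exact h
        · simp [h] at hs
      -- Step C : block preservation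
      have hblock : ∀ c : Fin (Ncols q (m+1)), c.1 ≠ 0 →
          (π c).1 ≠ 0 ∧ ((π c).1 - 1) / Ncols q m = (c.1 - 1) / Ncols q m := by
        intro c hc
        have hπc0 : (π c).1 ≠ 0 := by
          intro h
          have h2 : π c = π ⟨0,h0⟩ := by rw [hπ0]; exact Fin.ext h
          exact hc (congrArg Fin.val (π.injective h2))
        refine ⟨hπc0, ?_⟩
        obtain ⟨r0, hr0lt, hr0⟩ := colPrim q hq (m+1) (by omega) (π c).1 (π c).isLt
        obtain ⟨r', hr'⟩ := H1 ⟨r0, hr0lt⟩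
        have hsome' : (fractalEntry q (m+1) r'.1 c.1).isSome := by
          rw [show fractalEntry q (m+1) r'.1 c.1 = fractalMatrix q (m+1) r' c from rfl,
            hr' c]
          exact hr0
        have h1 := blockOf r'.1 c hc hsome'
        have h2 := blockOf r0 (π c) hπc0 hr0
        have h3 : r'.1 / Nrows q m = r0 / Nrows q m := digitB ⟨r0, hr0lt⟩ r' hr'
        omega
      -- entry computation inside a block
      have entry_block : ∀ (b ρ c' : ℕ), c' < Ncols q m → ρ / Nrows q m = b →
          fractalEntry q (m+1) ρ (1 + (c' + Ncols q m * b)) =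
            fractalEntry q m (ρ % Nrows q m) c' := by
        intro b ρ c' hc' hρ
        rw [entry_pos q m ρ _ (by omega), Nat.add_sub_cancel_left,
          Nat.add_mul_div_left _ _ hNpos, Nat.div_eq_of_lt hc',
          Nat.add_mul_mod_self_left, Nat.mod_eq_of_lt hc', hρ]
        simp
      -- Step D/E : within each block, π is the identity
      have hfixb : ∀ (b : ℕ) (hb : b < q) (c' : Fin (Ncols q m)),
          (π ⟨1 + (c'.1 + Ncols q m * b), by
              have := col_lt (Ncols q m) c'.1 b q c'.isLt hb; omega⟩).1
            = 1 + (c'.1 + Ncols q m * b) := by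
        intro b hb
        have hcol : ∀ c' : Fin (Ncols q m), 1 + (c'.1 + Ncols q m * b) < Ncols q (m+1) := by
          intro c'
          have := col_lt (Ncols q m) c'.1 b q c'.isLt hb; omega
        set g : Fin (Ncols q m) → Fin (Ncols q m) := fun c' =>
          ⟨((π ⟨1 + (c'.1 + Ncols q m * b), hcol c'⟩).1 - 1) % Ncols q m,
            Nat.mod_lt _ hNpos⟩ with hg
        have hval : ∀ c' : Fin (Ncols q m),
            (π ⟨1 + (c'.1 + Ncols q m * b), hcol c'⟩).1
              = 1 + ((g c').1 + Ncols q m * b) := by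
          intro c'
          obtain ⟨hne, hbl⟩ := hblock ⟨1 + (c'.1 + Ncols q m * b), hcol c'⟩ (by simp)
          have hbl2 : ((π ⟨1 + (c'.1 + Ncols q m * b), hcol c'⟩).1 - 1) / Ncols q m
              = b := by
            rw [hbl]
            show (1 + (c'.1 + Ncols q m * b) - 1) / Ncols q m = b
            rw [Nat.add_sub_cancel_left, Nat.add_mul_div_left _ _ hNpos,
              Nat.div_eq_of_lt c'.isLt]
            omega
          have hgv : (g c').1 =
              ((π ⟨1 + (c'.1 + Ncols q m * b), hcol c'⟩).1 - 1) % Ncols q m := rfl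
          have hmd := Nat.mod_add_div
            ((π ⟨1 + (c'.1 + Ncols q m * b), hcol c'⟩).1 - 1) (Ncols q m)
          rw [hbl2] at hmd
          omega
        have ginj : Function.Injective g := by
          intro c1 c2 h
          have h1 := hval c1
          have h2 := hval c2
          have h3 : π ⟨1 + (c1.1 + Ncols q m * b), hcol c1⟩
              = π ⟨1 + (c2.1 + Ncols q m * b), hcol c2⟩ :=
            Fin.ext (by rw [h1, h2, h])
          have h4 := congrArg Fin.val (π.injective h3)
          exact Fin.ext (by simpa using h4)
        set πb : Equiv.Perm (Fin (Ncols q m)) :=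
          Equiv.ofBijective g (Finite.injective_iff_bijective.mp ginj) with hπb
        have H1' : ∀ s : Fin (Nrows q m), ∃ s', ∀ c',
            fractalMatrix q m s' c' = fractalMatrix q m s (πb c') := by
          intro s
          obtain ⟨r', hr'⟩ := H1 ⟨s.1 + Nrows q m * b, by
            have := row_lt (Nrows q m) s.1 b q s.isLt hb; omega⟩
          have hdig : (s.1 + Nrows q m * b) / Nrows q m = b := by
            rw [Nat.add_mul_div_left _ _ hRpos, Nat.div_eq_of_lt s.isLt]
            omega
          have hd : r'.1 / Nrows q m = b := by
            have := digitB _ r' hr'; rw [this]; exact hdig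
          refine ⟨⟨r'.1 % Nrows q m, Nat.mod_lt _ hRpos⟩, fun c' => ?_⟩
          have key := hr' ⟨1 + (c'.1 + Ncols q m * b), hcol c'⟩
          have hLHS : fractalMatrix q (m+1) r' ⟨1 + (c'.1 + Ncols q m * b), hcol c'⟩
              = fractalEntry q m (r'.1 % Nrows q m) c'.1 :=
            entry_block b r'.1 c'.1 c'.isLt hd
          have hRHS : fractalMatrix q (m+1) ⟨s.1 + Nrows q m * b, by
                have := row_lt (Nrows q m) s.1 b q s.isLt hb; omega⟩
              (π ⟨1 + (c'.1 + Ncols q m * b), hcol c'⟩)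
              = fractalEntry q m s.1 (g c').1 := by
            show fractalEntry q (m+1) (s.1 + Nrows q m * b)
              (π ⟨1 + (c'.1 + Ncols q m * b), hcol c'⟩).1 = _
            rw [hval c', entry_block b _ (g c').1 (g c').isLt hdig,
              Nat.add_mul_mod_self_left, Nat.mod_eq_of_lt s.isLt]
          rw [hLHS, hRHS] at key
          exact key
        have H2' : ∀ s : Fin (Nrows q m), ∃ s', ∀ c',
            fractalMatrix q m s' (πb c') = fractalMatrix q m s c' := by
          intro s
          obtain ⟨r', hr'⟩ := H2 ⟨s.1 + Nrows q m * b, by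
            have := row_lt (Nrows q m) s.1 b q s.isLt hb; omega⟩
          have hdig : (s.1 + Nrows q m * b) / Nrows q m = b := by
            rw [Nat.add_mul_div_left _ _ hRpos, Nat.div_eq_of_lt s.isLt]
            omega
          have hd : r'.1 / Nrows q m = b := by
            have := digitB2 _ r' hr'; rw [this]; exact hdig
          refine ⟨⟨r'.1 % Nrows q m, Nat.mod_lt _ hRpos⟩, fun c' => ?_⟩
          have key := hr' ⟨1 + (c'.1 + Ncols q m * b), hcol c'⟩
          have hLHS : fractalMatrix q (m+1) r'
              (π ⟨1 + (c'.1 + Ncols q m * b), hcol c'⟩)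
              = fractalEntry q m (r'.1 % Nrows q m) (g c').1 := by
            show fractalEntry q (m+1) r'.1
              (π ⟨1 + (c'.1 + Ncols q m * b), hcol c'⟩).1 = _
            rw [hval c', entry_block b _ (g c').1 (g c').isLt hd]
          have hRHS : fractalMatrix q (m+1) ⟨s.1 + Nrows q m * b, by
                have := row_lt (Nrows q m) s.1 b q s.isLt hb; omega⟩
              ⟨1 + (c'.1 + Ncols q m * b), hcol c'⟩
              = fractalEntry q m s.1 c'.1 := by
            show fractalEntry q (m+1) (s.1 + Nrows q m * b)
              (1 + (c'.1 + Ncols q m * b)) = _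
            rw [entry_block b _ c'.1 c'.isLt hdig,
              Nat.add_mul_mod_self_left, Nat.mod_eq_of_lt s.isLt]
          rw [hLHS, hRHS] at key
          exact key
        have hπbid : πb = 1 := ih hm πb H1' H2'
        intro c'
        have hgid : g c' = c' := by
          have : πb c' = c' := by rw [hπbid]; rfl
          exact this
        rw [hval c', hgid]
      -- Step F : conclude
      apply Equiv.ext
      intro c
      simp only [Equiv.Perm.coe_one, id_eq]
      by_cases hc : c.1 = 0
      · have hce : c = ⟨0, h0⟩ := Fin.ext hc
        rw [hce, hπ0]
      · apply Fin.ext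
        have hclt : c.1 < 1 + q * Ncols q m := by have := c.isLt; omega
        have hb : (c.1 - 1) / Ncols q m < q :=
          (Nat.div_lt_iff_lt_mul hNpos).mpr (by omega)
        have hc' : (c.1 - 1) % Ncols q m < Ncols q m := Nat.mod_lt _ hNpos
        have hdecomp : c.1 = 1 + ((c.1 - 1) % Ncols q m
            + Ncols q m * ((c.1 - 1) / Ncols q m)) := by
          have := Nat.mod_add_div (c.1 - 1) (Ncols q m); omega
        have hkey := hfixb ((c.1 - 1) / Ncols q m) hb ⟨(c.1 - 1) % Ncols q m, hc'⟩
        have h5 : (π c).1 = (π ⟨1 + ((c.1 - 1) % Ncols q m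
            + Ncols q m * ((c.1 - 1) / Ncols q m)), by
              have := col_lt (Ncols q m) ((c.1-1) % Ncols q m) ((c.1-1)/Ncols q m) q hc' hb
              omega⟩).1 :=
          congrArg (fun z => (π z).1) (Fin.ext hdecomp)
        exact h5.trans (hkey.trans hdecomp.symm)

/-- Distinct column permutations of the fractal matrix `M_{q,m}` yield distinct unordered
partitions (distinct sets of star patterns); hence the number of unordered partitions
obtained from column permutations of `M_{q,m}` is exactly `N!`, `N = (q^m-1)/(q-1)`. -/
theorem stmt10 (q m : ℕ) (hq : 2 ≤ q) (hm : 1 ≤ m) :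
    (∀ σ τ : Equiv.Perm (Fin (Ncols q m)),
      (Set.range fun r : Fin (Nrows q m) => fun c => fractalMatrix q m r (σ c)) =
        (Set.range fun r : Fin (Nrows q m) => fun c => fractalMatrix q m r (τ c)) →
      σ = τ) ∧
    Nat.card {P : Set (Fin (Ncols q m) → Option (ZMod q)) //
        ∃ σ : Equiv.Perm (Fin (Ncols q m)),
          P = Set.range fun r : Fin (Nrows q m) => fun c => fractalMatrix q m r (σ c)} =
      Nat.factorial (Ncols q m) := by
  have key : ∀ σ τ : Equiv.Perm (Fin (Ncols q m)),
      (Set.range fun r : Fin (Nrows q m) => fun c => fractalMatrix q m r (σ c)) =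
        (Set.range fun r : Fin (Nrows q m) => fun c => fractalMatrix q m r (τ c)) →
      σ = τ := by
    intro σ τ hst
    have H1 : ∀ r : Fin (Nrows q m), ∃ r', ∀ c,
        fractalMatrix q m r' c = fractalMatrix q m r ((σ * τ⁻¹) c) := by
      intro r
      have hmem : (fun c => fractalMatrix q m r (σ c)) ∈
          Set.range fun r : Fin (Nrows q m) => fun c => fractalMatrix q m r (τ c) := by
        rw [← hst]; exact ⟨r, rfl⟩
      obtain ⟨r', hr'⟩ := hmem
      refine ⟨r', fun c => ?_⟩
      have h2 := congrFun hr' (τ⁻¹ c)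
      simpa using h2
    have H2 : ∀ r : Fin (Nrows q m), ∃ r', ∀ c,
        fractalMatrix q m r' ((σ * τ⁻¹) c) = fractalMatrix q m r c := by
      intro r
      have hmem : (fun c => fractalMatrix q m r (τ c)) ∈
          Set.range fun r : Fin (Nrows q m) => fun c => fractalMatrix q m r (σ c) := by
        rw [hst]; exact ⟨r, rfl⟩
      obtain ⟨r', hr'⟩ := hmem
      refine ⟨r', fun c => ?_⟩
      have h2 := congrFun hr' (τ⁻¹ c)
      simpa using h2
    exact mul_inv_eq_one.mp (good q hq m hm (σ * τ⁻¹) H1 H2)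
  refine ⟨key, ?_⟩
  set f : Equiv.Perm (Fin (Ncols q m)) → Set (Fin (Ncols q m) → Option (ZMod q)) :=
    fun σ => Set.range fun r : Fin (Nrows q m) => fun c => fractalMatrix q m r (σ c)
    with hf
  have hinj : Function.Injective f := fun σ τ h => key σ τ h
  have e : {P : Set (Fin (Ncols q m) → Option (ZMod q)) // ∃ σ, P = f σ} ≃
      Set.range f :=
    Equiv.subtypeEquivRight (fun P => by simp [Set.mem_range, eq_comm])
  calc Nat.card {P : Set (Fin (Ncols q m) → Option (ZMod q)) // ∃ σ, P = f σ}
      = Nat.card (Set.range f) := Nat.card_congr e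
    _ = Nat.card (Equiv.Perm (Fin (Ncols q m))) := Nat.card_range_of_injective hinj
    _ = Nat.factorial (Ncols q m) := by
        rw [Nat.card_eq_fintype_card, Fintype.card_perm, Fintype.card_fin]
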